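/- Let A be an n×n matrix over a totally ordered commutative group and let (μ, ν) be a minimal cover for A. Define ℓ_i := (max_k μ_k) − μ_i. Then ℓ is a canon for A. -/

import Mathlib

/-- The maximum of a function on `Fin n`, `n ≠ 0`. -/
def maxF {n : ℕ} [NeZero n] {M : Type*} [LinearOrder M] (f : Fin n → M) : M :=
  Finset.univ.sup' ⟨⟨0, Nat.pos_of_ne_zero (NeZero.ne n)⟩, Finset.mem_univ _⟩ f

/-- `ℓ` is a canon for the `n × n` matrix `A`. -/
def IsCanon {n : ℕ} {M : Type*} [AddCommGroup M] [LinearOrder M] [IsOrderedAddMonoid M]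
    (A : Fin n → Fin n → M) (ℓ : Fin n → M) : Prop :=
  (∀ i, 0 ≤ ℓ i) ∧
    ∃ σ : Equiv.Perm (Fin n), ∀ i i', A i' (σ i) + ℓ i' ≤ A i (σ i) + ℓ i

/-- `(μ, ν)` is a cover of `A`. -/
def IsCover {n : ℕ} {M : Type*} [AddCommGroup M] [LinearOrder M] [IsOrderedAddMonoid M]
    (A : Fin n → Fin n → M) (μ ν : Fin n → M) : Prop :=
  ∀ i j, A i j ≤ μ i + ν j

/-- A minimal cover minimizes `∑ i, (μ i + ν i)`. -/
def IsMinimalCover {n : ℕ} {M : Type*} [AddCommGroup M] [LinearOrder M] [IsOrderedAddMonoid M]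
    (A : Fin n → Fin n → M) (μ ν : Fin n → M) : Prop :=
  IsCover A μ ν ∧
    ∀ μ' ν', IsCover A μ' ν' → ∑ i, (μ i + ν i) ≤ ∑ i, (μ' i + ν' i)

open Finset in
/-- In a minimal cover there is a transversal of tight entries. -/
theorem exists_tight_perm {n : ℕ} {M : Type*}
    [AddCommGroup M] [LinearOrder M] [IsOrderedAddMonoid M] (A : Fin n → Fin n → M) (μ ν : Fin n → M)
    (hmin : IsMinimalCover A μ ν) :
    ∃ σ : Equiv.Perm (Fin n), ∀ i, A i (σ i) = μ i + ν (σ i) := by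
  classical
  obtain ⟨hcov, hopt⟩ := hmin
  set t : Fin n → Finset (Fin n) := fun i => univ.filter (fun j => A i j = μ i + ν j) with ht
  have hall : ∀ s : Finset (Fin n), s.card ≤ (s.biUnion t).card := by
    by_contra hc
    push_neg at hc
    obtain ⟨s, hs⟩ := hc
    set T := s.biUnion t with hT
    -- s nonempty, Tᶜ nonempty
    have hsne : s.Nonempty := by
      rw [← Finset.card_pos]; omega
    have hTc : Tᶜ.Nonempty := by
      rw [← Finset.card_pos, Finset.card_compl]
      have : T.card < s.card := hs
      have hsn : s.card ≤ Fintype.card (Fin n) := s.card_le_univ.trans_eq (by simp)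
      omega
    have hpairs : (s ×ˢ Tᶜ).Nonempty := hsne.product hTc
    set ε : M := (s ×ˢ Tᶜ).inf' hpairs (fun p => μ p.1 + ν p.2 - A p.1 p.2) with hε
    have hεpos : 0 < ε := by
      rw [hε]
      apply (Finset.lt_inf'_iff hpairs).mpr
      rintro ⟨i, j⟩ hij
      simp only [Finset.mem_product, Finset.mem_compl] at hij
      have hne : A i j ≠ μ i + ν j := by
        intro h
        exact hij.2 (Finset.mem_biUnion.mpr ⟨i, hij.1, by simp [ht, h]⟩)
      have := hcov i j
      have hlt : A i j < μ i + ν j := lt_of_le_of_ne this hne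
      simpa using hlt
    have hεle : ∀ i ∈ s, ∀ j ∈ Tᶜ, ε ≤ μ i + ν j - A i j := by
      intro i hi j hj
      exact Finset.inf'_le (f := fun p => μ p.1 + ν p.2 - A p.1 p.2) (b := (i, j)) (Finset.mem_product.mpr ⟨hi, hj⟩)
    set μ' : Fin n → M := fun i => μ i - (if i ∈ s then ε else 0) with hμ'
    set ν' : Fin n → M := fun j => ν j + (if j ∈ T then ε else 0) with hν'
    have hcov' : IsCover A μ' ν' := by
      intro i j
      by_cases his : i ∈ s
      · by_cases hjT : j ∈ T
        · simp only [hμ', hν', if_pos his, if_pos hjT]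
          have he : μ i - ε + (ν j + ε) = μ i + ν j := by abel
          rw [he]
          exact hcov i j
        · have h := hεle i his j (Finset.mem_compl.mpr hjT)
          rw [le_sub_comm] at h
          simp only [hμ', hν', if_pos his, if_neg hjT, add_zero]
          have he : μ i - ε + ν j = μ i + ν j - ε := by abel
          rw [he]
          exact h
      · have h0 : (0:M) ≤ (if j ∈ T then ε else 0) := by
          split_ifs
          · exact hεpos.le
          · exact le_refl 0
        simp only [hμ', hν', if_neg his, sub_zero, ← add_assoc]
        exact (hcov i j).trans (le_add_of_nonneg_right h0)
    have := hopt μ' ν' hcov'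
    have hsum : ∑ i, (μ' i + ν' i)
        = ∑ i, (μ i + ν i) + T.card • ε - s.card • ε := by
      have h1 : ∑ i, μ' i = ∑ i, μ i - s.card • ε := by
        simp only [hμ', Finset.sum_sub_distrib]
        congr 1
        rw [Finset.sum_ite_mem, Finset.univ_inter, Finset.sum_const]
      have h2 : ∑ i, ν' i = ∑ i, ν i + T.card • ε := by
        simp only [hν', Finset.sum_add_distrib]
        congr 1
        rw [Finset.sum_ite_mem, Finset.univ_inter, Finset.sum_const]
      rw [Finset.sum_add_distrib, h1, h2, Finset.sum_add_distrib]
      abel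
    rw [hsum, le_sub_iff_add_le] at this
    have hlt : T.card • ε < s.card • ε := nsmul_lt_nsmul_left hεpos hs
    have h3 : s.card • ε ≤ T.card • ε := by
      exact (add_le_add_iff_left (∑ i, (μ i + ν i))).mp this
    exact absurd h3 (not_le.mpr hlt)
  obtain ⟨f, hfinj, hf⟩ := (Finset.all_card_le_biUnion_card_iff_exists_injective t).mp hall
  refine ⟨Equiv.ofBijective f (Finite.injective_iff_bijective.mp hfinj), fun i => ?_⟩
  have := hf i
  simp only [ht, Finset.mem_filter] at this
  exact this.2

theorem canon_of_minimalCover {n : ℕ} [NeZero n] {M : Type*}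
    [AddCommGroup M] [LinearOrder M] [IsOrderedAddMonoid M] (A : Fin n → Fin n → M) (μ ν : Fin n → M)
    (hmin : IsMinimalCover A μ ν) :
    IsCanon A (fun i => maxF μ - μ i) := by
  obtain ⟨σ, hσ⟩ := exists_tight_perm A μ ν hmin
  constructor
  · intro i
    have : μ i ≤ maxF μ := Finset.le_sup' μ (Finset.mem_univ i)
    simpa using this
  · refine ⟨σ, fun i i' => ?_⟩
    have h1 : A i' (σ i) ≤ μ i' + ν (σ i) := hmin.1 i' (σ i)
    have h2 : A i (σ i) = μ i + ν (σ i) := hσ i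
    simp only
    calc A i' (σ i) + (maxF μ - μ i') ≤ (μ i' + ν (σ i)) + (maxF μ - μ i') :=
          add_le_add_left h1 _
      _ = ν (σ i) + maxF μ := by abel
      _ = A i (σ i) + (maxF μ - μ i) := by rw [h2]; abel
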